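/- Let c, ε₀, m, L_z, e > 0, N ∈ ℕ, ω̃ > 0 and Λ ≥ ω̃². Then the effective light–matter coupling constant of the 2D electron gas coupled to the in-plane continuum of cavity modes up to cutoff Λ satisfies g(Λ) = (e²N/(ε₀ m L_z))·(1/(4π²))·∫_{{(κ_x,κ_y) ∈ ℝ² : c²(κ_x² + κ_y²) + ω̃² ≤ Λ}} (c²(κ_x² + κ_y²) + ω̃²)⁻¹ d(κ_x,κ_y) = N·α·ln(Λ/ω̃²), where α = e²/(4π c² ε₀ m L_z). In particular g(Λ) → ∞ logarithmically as Λ → ∞ (ultraviolet divergence), while g remains finite for any finite Λ because ω̃² provides a natural infrared cutoff. -/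

import Mathlib

open MeasureTheory

open Set Real in
private lemma effective_coupling_integral
    (c : ℝ) (hc : 0 < c) (ωt Λ : ℝ) (hωt : 0 < ωt) (hΛ : ωt ^ 2 ≤ Λ) :
    (∫ κ in {κ : ℝ × ℝ | c ^ 2 * (κ.1 ^ 2 + κ.2 ^ 2) + ωt ^ 2 ≤ Λ},
        (c ^ 2 * (κ.1 ^ 2 + κ.2 ^ 2) + ωt ^ 2)⁻¹)
      = Real.pi / c ^ 2 * Real.log (Λ / ωt ^ 2) := by
  have hc2 : (0:ℝ) < c ^ 2 := by positivity
  have hΛ0 : (0:ℝ) < Λ := lt_of_lt_of_le (by positivity) hΛ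
  set R := Real.sqrt ((Λ - ωt ^ 2) / c ^ 2) with hRdef
  have hRnn : 0 ≤ R := Real.sqrt_nonneg _
  have hR2 : c ^ 2 * R ^ 2 = Λ - ωt ^ 2 := by
    rw [hRdef, Real.sq_sqrt (div_nonneg (by linarith) hc2.le)]
    field_simp
  set S : Set (ℝ × ℝ) := {κ : ℝ × ℝ | c ^ 2 * (κ.1 ^ 2 + κ.2 ^ 2) + ωt ^ 2 ≤ Λ} with hS
  set T : Set ℝ := {r : ℝ | c ^ 2 * r ^ 2 + ωt ^ 2 ≤ Λ} with hT
  have hSm : MeasurableSet S := by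
    apply measurableSet_le
    · fun_prop
    · fun_prop
  have hTm : MeasurableSet T := by
    apply measurableSet_le
    · fun_prop
    · fun_prop
  set f : ℝ × ℝ → ℝ := fun κ => (c ^ 2 * (κ.1 ^ 2 + κ.2 ^ 2) + ωt ^ 2)⁻¹ with hf
  set F : ℝ → ℝ := fun r => r * T.indicator (fun r => (c ^ 2 * r ^ 2 + ωt ^ 2)⁻¹) r with hF
  have step1 : (∫ κ in S, f κ) = ∫ p in polarCoord.target, p.1 • S.indicator f (polarCoord.symm p) := by
    rw [← integral_indicator hSm, ← integral_comp_polarCoord_symm]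
  have hsymm : ∀ p : ℝ × ℝ, polarCoord.symm p = (p.1 * Real.cos p.2, p.1 * Real.sin p.2) :=
    fun p => rfl
  have step2 : ∀ p : ℝ × ℝ, p.1 • S.indicator f (polarCoord.symm p) = F p.1 * (fun _ : ℝ => (1:ℝ)) p.2 := by
    intro p
    have hsq : (p.1 * Real.cos p.2) ^ 2 + (p.1 * Real.sin p.2) ^ 2 = p.1 ^ 2 := by
      have h := Real.sin_sq_add_cos_sq p.2
      nlinarith [h]
    have hmem : polarCoord.symm p ∈ S ↔ p.1 ∈ T := by
      rw [hsymm p]; simp only [hS, hT, Set.mem_setOf_eq, hsq]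
    simp only [hF, smul_eq_mul, mul_one]
    by_cases h : p.1 ∈ T
    · rw [Set.indicator_of_mem (hmem.mpr h), Set.indicator_of_mem h, hf, hsymm p]
      simp only [hsq]
    · rw [Set.indicator_of_notMem (fun hh => h (hmem.mp hh)), Set.indicator_of_notMem h]
  have step3 : (∫ p in polarCoord.target, p.1 • S.indicator f (polarCoord.symm p))
      = (∫ r in Set.Ioi (0:ℝ), F r) * ∫ y in Set.Ioo (-Real.pi) Real.pi, (1:ℝ) := by
    have htgt : polarCoord.target = Set.Ioi (0:ℝ) ×ˢ Set.Ioo (-Real.pi) Real.pi := rfl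
    rw [htgt]
    rw [show (fun p : ℝ × ℝ => p.1 • S.indicator f (polarCoord.symm p))
        = fun p : ℝ × ℝ => F p.1 * (fun _ : ℝ => (1:ℝ)) p.2 from funext step2]
    exact setIntegral_prod_mul F (fun _ => (1:ℝ)) _ _
  have hangle : (∫ y in Set.Ioo (-Real.pi) Real.pi, (1:ℝ)) = 2 * Real.pi := by
    simp only [integral_const, smul_eq_mul, mul_one, Measure.restrict_apply_univ,
      Real.volume_Ioo]
    rw [measureReal_def, Measure.restrict_apply_univ, Real.volume_Ioo,
      ENNReal.toReal_ofReal (by linarith [Real.pi_pos])]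
    ring
  have hIocT : Set.Ioi (0:ℝ) ∩ T = Set.Ioc 0 R := by
    ext r
    simp only [Set.mem_inter_iff, Set.mem_Ioi, hT, Set.mem_setOf_eq, Set.mem_Ioc]
    constructor
    · rintro ⟨hr, hle⟩
      refine ⟨hr, Real.le_sqrt_of_sq_le ?_⟩
      rw [le_div_iff₀ hc2]
      nlinarith
    · rintro ⟨hr, hle⟩
      refine ⟨hr, ?_⟩
      have h2 : r ^ 2 ≤ (Λ - ωt ^ 2) / c ^ 2 :=
        (Real.le_sqrt hr.le (div_nonneg (by linarith) hc2.le)).mp hle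
      nlinarith [(le_div_iff₀ hc2).mp h2]
  have hrad : (∫ r in Set.Ioi (0:ℝ), F r) = (2 * c ^ 2)⁻¹ * Real.log (Λ / ωt ^ 2) := by
    have hind : ∀ r : ℝ, F r = T.indicator (fun r => r * (c ^ 2 * r ^ 2 + ωt ^ 2)⁻¹) r := by
      intro r
      by_cases h : r ∈ T
      · simp [hF, Set.indicator_of_mem h]
      · simp [hF, Set.indicator_of_notMem h]
    rw [show F = T.indicator (fun r => r * (c ^ 2 * r ^ 2 + ωt ^ 2)⁻¹) from funext hind]
    rw [setIntegral_indicator hTm, hIocT, ← intervalIntegral.integral_of_le hRnn]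
    have hder : ∀ r ∈ Set.uIcc (0:ℝ) R,
        HasDerivAt (fun r => (2 * c ^ 2)⁻¹ * Real.log (c ^ 2 * r ^ 2 + ωt ^ 2))
          (r * (c ^ 2 * r ^ 2 + ωt ^ 2)⁻¹) r := by
      intro r _
      have hpos : 0 < c ^ 2 * r ^ 2 + ωt ^ 2 := by positivity
      have h1 : HasDerivAt (fun r : ℝ => c ^ 2 * r ^ 2 + ωt ^ 2) (c ^ 2 * (2 * r)) r := by
        simpa using (((hasDerivAt_pow 2 r).const_mul (c ^ 2)).add_const (ωt ^ 2))
      have h2 := (Real.hasDerivAt_log hpos.ne').comp r h1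
      have h3 := h2.const_mul ((2 * c ^ 2)⁻¹)
      refine h3.congr_deriv ?_
      have hc0 : c ^ 2 ≠ 0 := hc2.ne'
      have hp0 := hpos.ne'
      field_simp
    have hcont : Continuous fun r : ℝ => r * (c ^ 2 * r ^ 2 + ωt ^ 2)⁻¹ := by
      apply continuous_id.mul
      apply Continuous.inv₀
      · fun_prop
      · intro x; positivity
    rw [intervalIntegral.integral_eq_sub_of_hasDerivAt hder (hcont.intervalIntegrable _ _)]
    have hc2R : c ^ 2 * R ^ 2 + ωt ^ 2 = Λ := by linarith
    rw [hc2R]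
    have : c ^ 2 * (0:ℝ) ^ 2 + ωt ^ 2 = ωt ^ 2 := by ring
    rw [this, ← mul_sub, ← Real.log_div hΛ0.ne' (by positivity)]
  rw [step1, step3, hangle, hrad]
  field_simp

/-- The effective light–matter coupling constant of the 2D electron gas
coupled to the in-plane continuum of cavity modes up to the ultraviolet cutoff
`Λ` equals `N·α·ln(Λ/ω̃²)`, with `α = e²/(4π c² ε₀ m L_z)`: it diverges only
logarithmically in `Λ` and is infrared finite thanks to the natural infrared
cutoff `ω̃²`. -/
theorem effective_coupling_constant_logarithmic
    (c ε₀ m L_z e : ℝ) (hc : 0 < c) (hε₀ : 0 < ε₀) (hm : 0 < m)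
    (hL : 0 < L_z) (he : 0 < e)
    (N : ℕ) (ωt Λ α : ℝ) (hωt : 0 < ωt) (hΛ : ωt ^ 2 ≤ Λ)
    (hα : α = e ^ 2 / (4 * Real.pi * c ^ 2 * ε₀ * m * L_z)) :
    e ^ 2 * (N : ℝ) / (ε₀ * m * L_z) * (1 / (4 * Real.pi ^ 2)) *
        ∫ κ in {κ : ℝ × ℝ | c ^ 2 * (κ.1 ^ 2 + κ.2 ^ 2) + ωt ^ 2 ≤ Λ},
          (c ^ 2 * (κ.1 ^ 2 + κ.2 ^ 2) + ωt ^ 2)⁻¹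
      = (N : ℝ) * α * Real.log (Λ / ωt ^ 2) := by
  rw [effective_coupling_integral c hc ωt Λ hωt hΛ, hα]
  have hπ : Real.pi ≠ 0 := Real.pi_ne_zero
  field_simp
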